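/- Let T be a commutative ring, let R be a T-algebra all of whose idempotents are central (a normal algebra), let n ≥ 1, and let K = T(n,R) be the algebra of upper triangular n×n matrices over R. Then every T-algebra automorphism φ of K is a product of an inner automorphism and a ring automorphism: there exist an invertible element u of K and a T-algebra automorphism α of R such that φ(A) = u · ᾱ(A) · u⁻¹ for all A ∈ K, where ᾱ applies α entrywise. -/

import Mathlib

/-- The `T`-subalgebra of upper triangular `n × n` matrices over `R`. -/
def triangularSubalgebra (T R : Type*) [CommRing T] [Ring R] [Algebra T R] (n : ℕ) :
    Subalgebra T (Matrix (Fin n) (Fin n) R) where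
  carrier := {A | ∀ ⦃i j : Fin n⦄, j < i → A i j = 0}
  add_mem' := fun {A B} hA hB i j hij => by
    simp [Matrix.add_apply, hA hij, hB hij]
  mul_mem' := fun {A B} hA hB i j hij => by
    simp only [Matrix.mul_apply]
    refine Finset.sum_eq_zero fun k _ => ?_
    rcases lt_or_ge k i with h | h
    · rw [hA h, zero_mul]
    · rw [hB (lt_of_lt_of_le hij h), mul_zero]
  algebraMap_mem' := fun t i j hij => by
    simp [Matrix.algebraMap_matrix_apply, (ne_of_lt hij).symm]

/-- The set of strictly upper triangular matrices inside the triangular matrix algebra. -/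
def strictlyUpper (T R : Type*) [CommRing T] [Ring R] [Algebra T R] (n : ℕ) :
    Set (triangularSubalgebra T R n) :=
  {A | ∀ i j : Fin n, j ≤ i → (A : Matrix (Fin n) (Fin n) R) i j = 0}

/-- The entrywise action of an automorphism `α` of `R` on the triangular matrix algebra. -/
def entrywiseMap (T R : Type*) [CommRing T] [Ring R] [Algebra T R] (n : ℕ)
    (α : R ≃ₐ[T] R) (A : triangularSubalgebra T R n) : triangularSubalgebra T R n :=
  ⟨Matrix.of fun i j => α ((A : Matrix (Fin n) (Fin n) R) i j),
    fun i j hij => by simp [Matrix.of_apply, A.2 hij]⟩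

namespace Stmt12Aux

open Matrix

variable {T R : Type*} [CommRing T] [Ring R] [Algebra T R] {n : ℕ}

/-- matrix unit with entry `r` at `(i,j)`, `i ≤ j`, as an element of the triangular algebra -/
def sbm (i j : Fin n) (h : i ≤ j) (r : R) : triangularSubalgebra T R n :=
  ⟨Matrix.single i j r, by
    intro a b hab
    refine Matrix.single_apply_of_ne i j r a b ?_
    rintro ⟨rfl, rfl⟩
    exact absurd hab (not_lt.2 h)⟩

@[simp] lemma sbm_val (i j : Fin n) (h : i ≤ j) (r : R) :
    ((sbm (T := T) i j h r : triangularSubalgebra T R n) : Matrix (Fin n) (Fin n) R)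
      = Matrix.single i j r := rfl

lemma sbm_mul (i j k : Fin n) (h : i ≤ j) (h' : j ≤ k) (r s : R) :
    sbm (T := T) i j h r * sbm j k h' s = sbm i k (h.trans h') (r * s) :=
  Subtype.ext (Matrix.single_mul_single_same _ _ _ _ _)

lemma sbm_mul_ne {j k : Fin n} (hjk : j ≠ k) (i l : Fin n) (h : i ≤ j) (h' : k ≤ l) (r s : R) :
    sbm (T := T) i j h r * sbm k l h' s = 0 :=
  Subtype.ext (Matrix.single_mul_single_of_ne _ _ _ _ hjk _)

lemma sbm_injective (i j : Fin n) (h : i ≤ j) {r s : R}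
    (hrs : sbm (T := T) i j h r = sbm i j h s) : r = s := by
  have := congrArg (fun A : triangularSubalgebra T R n =>
    (A : Matrix (Fin n) (Fin n) R) i j) hrs
  simpa using this

@[simp] lemma sbm_zero (i j : Fin n) (h : i ≤ j) :
    sbm (T := T) i j h (0 : R) = 0 := by
  apply Subtype.ext
  rw [sbm_val, Matrix.single_zero]
  rfl

lemma sbm_add (i j : Fin n) (h : i ≤ j) (r s : R) :
    sbm (T := T) i j h (r + s) = sbm i j h r + sbm i j h s :=
  Subtype.ext (Matrix.single_add _ _ _ _)

lemma sbm_smul (i j : Fin n) (h : i ≤ j) (t : T) (r : R) :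
    sbm (T := T) i j h (t • r) = t • sbm i j h r :=
  Subtype.ext (by simp [Matrix.smul_single])

/-- the diagonal idempotent `E_{ii}` -/
def ee (i : Fin n) : triangularSubalgebra T R n := sbm i i le_rfl 1

lemma peirce_val (i j : Fin n) (A : triangularSubalgebra T R n) :
    ((ee (T := T) i * A * ee j : triangularSubalgebra T R n) : Matrix (Fin n) (Fin n) R)
      = Matrix.single i j ((A : Matrix (Fin n) (Fin n) R) i j) := by
  show Matrix.single i i (1 : R) * (A : Matrix (Fin n) (Fin n) R)
      * Matrix.single j j (1 : R) = _
  ext a b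
  rcases eq_or_ne b j with rfl | hb
  · rw [Matrix.mul_single_apply_same]
    rcases eq_or_ne a i with rfl | ha
    · rw [Matrix.single_mul_apply_same]
      simp
    · rw [Matrix.single_mul_apply_of_ne _ _ _ _ _ ha]
      simp [Ne.symm ha]
  · rw [Matrix.mul_single_apply_of_ne _ _ _ _ _ hb]
    simp [Ne.symm hb]

lemma peirce (i j : Fin n) (h : i ≤ j) (A : triangularSubalgebra T R n) :
    ee (T := T) i * A * ee j = sbm i j h ((A : Matrix (Fin n) (Fin n) R) i j) :=
  Subtype.ext (peirce_val i j A)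

lemma peirce_lt {i j : Fin n} (h : j < i) (A : triangularSubalgebra T R n) :
    ee (T := T) i * A * ee j = 0 := by
  apply Subtype.ext
  rw [peirce_val, A.2 h, Matrix.single_zero]
  rfl

lemma sum_sbm_matrix : ∑ i : Fin n, Matrix.single i i (1 : R) = 1 := by
  ext a b
  simp only [Matrix.sum_apply, Matrix.single, Matrix.of_apply, Matrix.one_apply]
  rcases eq_or_ne a b with rfl | hab
  · simp
  · simp only [if_neg hab]
    exact Finset.sum_eq_zero fun c _ => by
      rw [if_neg]; rintro ⟨rfl, rfl⟩; exact hab rfl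

lemma sum_ee : ∑ i, ee (T := T) (R := R) (n := n) i = 1 := by
  apply Subtype.ext
  rw [AddSubmonoidClass.coe_finset_sum]
  show ∑ i : Fin n, Matrix.single i i (1 : R) = _
  rw [sum_sbm_matrix]
  rfl

-- chunk 2 (appended inside namespace Stmt12Aux, after chunk 1 content)

/-- a diagonal matrix as element of the triangular algebra -/
def diagK (f : Fin n → R) : triangularSubalgebra T R n :=
  ⟨Matrix.diagonal f, by
    intro a b hab
    exact Matrix.diagonal_apply_ne f (ne_of_gt hab)⟩

@[simp] lemma diagK_val (f : Fin n → R) :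
    ((diagK (T := T) f : triangularSubalgebra T R n) : Matrix (Fin n) (Fin n) R)
      = Matrix.diagonal f := rfl

lemma diagK_mul_diagK (f g : Fin n → R) :
    diagK (T := T) f * diagK g = diagK (fun k => f k * g k) :=
  Subtype.ext (by simp [Matrix.diagonal_mul_diagonal])

lemma diagK_one : diagK (T := T) (R := R) (n := n) (fun _ => 1) = 1 :=
  Subtype.ext (by simp)

lemma diagK_sbm_diagK (f g : Fin n → R) (k l : Fin n) (h : k ≤ l) (r : R) :
    diagK (T := T) f * sbm k l h r * diagK g = sbm k l h (f k * r * g l) := by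
  apply Subtype.ext
  show Matrix.diagonal f * Matrix.single k l r * Matrix.diagonal g
      = Matrix.single k l (f k * r * g l)
  ext a b
  rw [Matrix.mul_diagonal, Matrix.diagonal_mul]
  rcases eq_or_ne a k with rfl | ha
  · rcases eq_or_ne b l with rfl | hb
    · simp
    · rw [Matrix.single_apply_of_ne _ _ _ _ _ (by tauto),
        Matrix.single_apply_of_ne _ _ _ _ _ (by tauto)]
      simp
  · rw [Matrix.single_apply_of_ne _ _ _ _ _ (by tauto),
      Matrix.single_apply_of_ne _ _ _ _ _ (by tauto)]
    simp

/-- the `(k,k)` entry of a product is the product of the `(k,k)` entries,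
for upper triangular matrices -/
lemma diag_entry_mul (A B : triangularSubalgebra T R n) (k : Fin n) :
    ((A * B : triangularSubalgebra T R n) : Matrix (Fin n) (Fin n) R) k k
      = (A : Matrix (Fin n) (Fin n) R) k k * (B : Matrix (Fin n) (Fin n) R) k k := by
  show ((A : Matrix (Fin n) (Fin n) R) * (B : Matrix (Fin n) (Fin n) R)) k k = _
  rw [Matrix.mul_apply]
  refine Finset.sum_eq_single k (fun c _ hc => ?_) (by simp)
  rcases lt_or_gt_of_ne hc with h | h
  · rw [A.2 h, zero_mul]
  · rw [B.2 h, mul_zero]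

lemma strict_pow_entry (N : Matrix (Fin n) (Fin n) R)
    (hN : ∀ a b : Fin n, b ≤ a → N a b = 0) :
    ∀ (m : ℕ) (a b : Fin n), b.val < a.val + m → (N ^ m) a b = 0 := by
  intro m
  induction m with
  | zero =>
    intro a b hab
    rw [pow_zero]
    exact Matrix.one_apply_ne (by intro h; subst h; omega)
  | succ m ih =>
    intro a b hab
    rw [pow_succ, Matrix.mul_apply]
    refine Finset.sum_eq_zero fun c _ => ?_
    rcases lt_or_ge c.val (a.val + m) with h | h
    · rw [ih a c h, zero_mul]
    · rw [hN c b (by omega), mul_zero]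

lemma isUnit_of_diag_one (A : triangularSubalgebra T R n)
    (h1 : ∀ k, (A : Matrix (Fin n) (Fin n) R) k k = 1) : IsUnit A := by
  have hnil : IsNilpotent (A - 1) := by
    refine ⟨n, ?_⟩
    apply Subtype.ext
    rw [SubmonoidClass.coe_pow]
    show ((A - 1 : triangularSubalgebra T R n) : Matrix (Fin n) (Fin n) R) ^ n = ((0 : triangularSubalgebra T R n) : Matrix (Fin n) (Fin n) R)
    have hsu : ∀ a b : Fin n, b ≤ a →
        ((A - 1 : triangularSubalgebra T R n) : Matrix (Fin n) (Fin n) R) a b = 0 := by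
      intro a b hab
      have : ((A - 1 : triangularSubalgebra T R n) : Matrix (Fin n) (Fin n) R)
          = (A : Matrix (Fin n) (Fin n) R) - 1 := by push_cast; rfl
      rw [this, Matrix.sub_apply]
      rcases eq_or_lt_of_le hab with rfl | hlt
      · rw [h1 _, Matrix.one_apply_eq, sub_self]
      · rw [A.2 hlt, Matrix.one_apply_ne (ne_of_gt hlt), sub_zero]
    ext a b
    rw [strict_pow_entry _ hsu n a b (by have := b.isLt; omega)]
    rfl
  have h2 := hnil.isUnit_one_add
  have h3 : (1 : triangularSubalgebra T R n) + (A - 1) = A := by abel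
  rwa [h3] at h2

lemma pinning {d : Fin n → Fin n → R}
    (hcomm : ∀ (i k : Fin n) (r : R), d i k * r = r * d i k)
    (hsum : ∀ k : Fin n, ∑ i, d i k = 1)
    (hc : ∀ {i j k l : Fin n}, j < i → k ≤ l → d i k * d j l = 0)
    (hrow : ∀ {i k l : Fin n}, k ≠ l → d i k * d i l = 0) :
    ∀ i k, d i k = if i = k then 1 else 0 := by
  have stepA : ∀ i k : Fin n, i < k → d i k = 0 := by
    have key : ∀ m : ℕ, ∀ i k : Fin n, i.val = m → i < k → d i k = 0 := by
      intro m
      induction m using Nat.strong_induction_on with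
      | _ m IH =>
        intro i k him hik
        have : d i k = ∑ j, d i k * d j i := by
          rw [← Finset.mul_sum, hsum i, mul_one]
        rw [this]
        refine Finset.sum_eq_zero fun j _ => ?_
        rcases lt_trichotomy j i with h | rfl | h
        · rw [IH j.val (by omega) j i rfl h, mul_zero]
        · exact hrow (ne_of_gt hik)
        · rw [hcomm]
          exact hc h (le_of_lt hik)
    exact fun i k h => key i.val i k rfl h
  have main : ∀ m : ℕ, ∀ i : Fin n, n - i.val = m → ∀ k, d i k = if i = k then 1 else 0 := by
    intro m
    induction m using Nat.strong_induction_on with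
    | _ m IH =>
      intro i him k
      have hgt : ∀ j : Fin n, i < j → ∀ k', d j k' = if j = k' then 1 else 0 := by
        intro j hj k'
        exact IH (n - j.val) (by omega) j rfl k'
      have hdiag : d i i = 1 := by
        have hs := hsum i
        rw [Finset.sum_eq_single i (fun j _ hj => ?_) (by simp)] at hs
        · exact hs
        · rcases lt_or_gt_of_ne hj with h | h
          · exact stepA j i h
          · rw [hgt j h i, if_neg (ne_of_gt h)]
      rcases eq_or_ne i k with rfl | hik
      · rw [if_pos rfl]; exact hdiag
      · rw [if_neg hik]
        calc d i k = d i k * d i i := by rw [hdiag, mul_one]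
        _ = 0 := hrow (Ne.symm hik)
  exact fun i k => main (n - i.val) i rfl k

/-- conjugation by a unit, as an algebra automorphism -/
def innerAut (U : (triangularSubalgebra T R n)ˣ) :
    triangularSubalgebra T R n ≃ₐ[T] triangularSubalgebra T R n where
  toFun A := U * A * ↑U⁻¹
  invFun A := ↑U⁻¹ * A * U
  left_inv A := by
    simp only [mul_assoc, Units.inv_mul_cancel_left, Units.mul_inv_cancel_left,
      Units.inv_mul, Units.mul_inv, mul_one]
  right_inv A := by
    simp only [mul_assoc, Units.inv_mul_cancel_left, Units.mul_inv_cancel_left,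
      Units.inv_mul, Units.mul_inv, mul_one]
  map_mul' A B := by
    show (U : triangularSubalgebra T R n) * (A * B) * ↑U⁻¹
        = ((U : triangularSubalgebra T R n) * A * ↑U⁻¹) * ((U : triangularSubalgebra T R n) * B * ↑U⁻¹)
    simp only [mul_assoc, Units.inv_mul_cancel_left]
  map_add' A B := by
    show (U : triangularSubalgebra T R n) * (A + B) * ↑U⁻¹ = _
    rw [mul_add, add_mul]
  commutes' t := by
    show (U : triangularSubalgebra T R n) * algebraMap T _ t * ↑U⁻¹ = algebraMap T _ t
    rw [← Algebra.commutes t (U : triangularSubalgebra T R n), mul_assoc, Units.mul_inv, mul_one]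

@[simp] lemma innerAut_apply (U : (triangularSubalgebra T R n)ˣ)
    (A : triangularSubalgebra T R n) : innerAut U A = U * A * ↑U⁻¹ := rfl
-- chunk 3 : stage 2

lemma ee_mul_sbm_mul_ee (i j : Fin n) (h : i ≤ j) (r : R) :
    ee (T := T) i * sbm i j h r * ee j = sbm i j h r := by
  rw [peirce i j h]
  congr 1
  simp

variable (ψ : triangularSubalgebra T R n ≃ₐ[T] triangularSubalgebra T R n)

/-- the entry map of `ψ` on the `(i,j)` Peirce component -/
def aMap (i j : Fin n) (h : i ≤ j) (r : R) : R :=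
  ((ψ (sbm i j h r) : triangularSubalgebra T R n) : Matrix (Fin n) (Fin n) R) i j

lemma psi_sbm (hψ : ∀ i, ψ (ee i) = ee i) (i j : Fin n) (h : i ≤ j) (r : R) :
    ψ (sbm i j h r) = sbm i j h (aMap ψ i j h r) := by
  conv_lhs => rw [← ee_mul_sbm_mul_ee i j h r]
  rw [_root_.map_mul, _root_.map_mul, hψ i, hψ j, peirce i j h]
  rfl

lemma hψ_symm (hψ : ∀ i, ψ (ee i) = ee i) : ∀ i, ψ.symm (ee (T := T) (R := R) i) = ee i :=
  fun i => by conv_lhs => rw [← hψ i, AlgEquiv.symm_apply_apply]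

lemma aMap_left_inv (hψ : ∀ i, ψ (ee i) = ee i) (i j : Fin n) (h : i ≤ j) (r : R) :
    aMap ψ i j h (aMap ψ.symm i j h r) = r := by
  have h1 := psi_sbm ψ.symm (hψ_symm ψ hψ) i j h r
  have h2 : ψ (sbm i j h (aMap ψ.symm i j h r)) = sbm i j h r := by
    rw [← h1, AlgEquiv.apply_symm_apply]
  rw [psi_sbm ψ hψ] at h2
  exact sbm_injective i j h h2

lemma aMap_right_inv (hψ : ∀ i, ψ (ee i) = ee i) (i j : Fin n) (h : i ≤ j) (r : R) :
    aMap ψ.symm i j h (aMap ψ i j h r) = r := by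
  have h1 := psi_sbm ψ hψ i j h r
  have h2 : ψ.symm (sbm i j h (aMap ψ i j h r)) = sbm i j h r := by
    rw [← h1, AlgEquiv.symm_apply_apply]
  rw [psi_sbm ψ.symm (hψ_symm ψ hψ) i j h] at h2
  exact sbm_injective i j h h2

lemma aMap_add (hψ : ∀ i, ψ (ee i) = ee i) (i j : Fin n) (h : i ≤ j) (r s : R) :
    aMap ψ i j h (r + s) = aMap ψ i j h r + aMap ψ i j h s := by
  apply sbm_injective (T := T) i j h
  rw [← psi_sbm ψ hψ, sbm_add, sbm_add, _root_.map_add, psi_sbm ψ hψ, psi_sbm ψ hψ]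

lemma aMap_smul (hψ : ∀ i, ψ (ee i) = ee i) (i j : Fin n) (h : i ≤ j) (t : T) (r : R) :
    aMap ψ i j h (t • r) = t • aMap ψ i j h r := by
  apply sbm_injective (T := T) i j h
  rw [← psi_sbm ψ hψ, sbm_smul, sbm_smul, _root_.map_smul, psi_sbm ψ hψ]

lemma aMap_diag_mul (hψ : ∀ i, ψ (ee i) = ee i) (i : Fin n) (r s : R) :
    aMap ψ i i le_rfl (r * s) = aMap ψ i i le_rfl r * aMap ψ i i le_rfl s := by
  apply sbm_injective (T := T) i i le_rfl
  rw [← psi_sbm ψ hψ, ← sbm_mul i i i le_rfl le_rfl, ← sbm_mul i i i le_rfl le_rfl, _root_.map_mul,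
    psi_sbm ψ hψ, psi_sbm ψ hψ]

lemma aMap_diag_one (hψ : ∀ i, ψ (ee i) = ee i) (i : Fin n) :
    aMap ψ i i le_rfl (1 : R) = 1 := by
  have h1 := psi_sbm ψ hψ i i le_rfl 1
  have h2 : ψ (ee i) = sbm i i le_rfl (aMap ψ i i le_rfl 1) := h1
  rw [hψ i] at h2
  have h3 : sbm (T := T) i i le_rfl (1 : R) = sbm i i le_rfl (aMap ψ i i le_rfl 1) := h2
  exact (sbm_injective i i le_rfl h3).symm

lemma aMap_comp (hψ : ∀ i, ψ (ee i) = ee i) (i j k : Fin n) (h : i ≤ j) (h' : j ≤ k) (r s : R) :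
    aMap ψ i k (h.trans h') (r * s) = aMap ψ i j h r * aMap ψ j k h' s := by
  apply sbm_injective (T := T) i k (h.trans h')
  rw [← psi_sbm ψ hψ, ← sbm_mul i j k h h', _root_.map_mul, psi_sbm ψ hψ, psi_sbm ψ hψ, sbm_mul]

lemma stage2 (hn : 1 ≤ n) (ψ : triangularSubalgebra T R n ≃ₐ[T] triangularSubalgebra T R n)
    (hψ : ∀ i, ψ (ee i) = ee i) :
    ∃ (V : (triangularSubalgebra T R n)ˣ) (α : R ≃ₐ[T] R),
      ∀ A : triangularSubalgebra T R n,
        ψ A = ↑V * entrywiseMap T R n α A * ↑V⁻¹ := by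
  obtain ⟨i0, le0⟩ : ∃ i0 : Fin n, ∀ j, i0 ≤ j :=
    ⟨⟨0, hn⟩, fun j => Fin.mk_le_of_le_val (Nat.zero_le _)⟩
  -- the automorphism α of R
  let α : R ≃ₐ[T] R :=
    { toFun := aMap ψ i0 i0 le_rfl
      invFun := aMap ψ.symm i0 i0 le_rfl
      left_inv := fun r => aMap_right_inv ψ hψ i0 i0 le_rfl r
      right_inv := fun r => aMap_left_inv ψ hψ i0 i0 le_rfl r
      map_mul' := fun r s => aMap_diag_mul ψ hψ i0 r s
      map_add' := fun r s => aMap_add ψ hψ i0 i0 le_rfl r s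
      commutes' := fun t => by
        have h1 := aMap_smul ψ hψ i0 i0 le_rfl t 1
        rw [aMap_diag_one ψ hψ i0] at h1
        show aMap ψ i0 i0 le_rfl (algebraMap T R t) = algebraMap T R t
        rw [Algebra.algebraMap_eq_smul_one, h1] }
  have hα : ∀ r, α r = aMap ψ i0 i0 le_rfl r := fun r => rfl
  -- the cocycle
  set b : Fin n → R := fun j => aMap ψ i0 j (le0 j) 1 with hb
  set s : Fin n → R := fun j => aMap ψ.symm i0 j (le0 j) 1 with hs
  set binv : Fin n → R := fun j => aMap ψ j j le_rfl (s j) with hbinv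
  have hsj : ∀ j, aMap ψ i0 j (le0 j) (s j) = 1 := fun j => aMap_left_inv ψ hψ i0 j (le0 j) 1
  have relA : ∀ (j : Fin n) (r : R), aMap ψ i0 j (le0 j) r = α r * b j := by
    intro j r
    have := aMap_comp ψ hψ i0 i0 j le_rfl (le0 j) r 1
    rwa [mul_one] at this
  have relB : ∀ (j : Fin n) (r : R), aMap ψ i0 j (le0 j) r = b j * aMap ψ j j le_rfl r := by
    intro j r
    have := aMap_comp ψ hψ i0 j j (le0 j) le_rfl 1 r
    rwa [one_mul] at this
  have relC : ∀ (i j : Fin n) (h : i ≤ j) (r : R),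
      b i * aMap ψ i j h r = aMap ψ i0 j (le0 j) r := by
    intro i j h r
    have := aMap_comp ψ hψ i0 i j (le0 i) h 1 r
    rw [one_mul] at this
    exact this.symm
  have hbr : ∀ j, b j * binv j = 1 := by
    intro j
    rw [hbinv]
    have h1 := relB j (s j)
    rw [hsj j] at h1
    exact h1.symm
  have hbl : ∀ j, binv j * b j = 1 := by
    intro j
    have h1 := relA j (s j)
    rw [hsj j] at h1
    -- h1 : 1 = α (s j) * b j
    have h2 : binv j = α (s j) := by
      calc binv j = (α (s j) * b j) * binv j := by rw [← h1, one_mul]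
      _ = α (s j) * (b j * binv j) := by rw [mul_assoc]
      _ = α (s j) := by rw [hbr j, mul_one]
    rw [h2, ← h1]
  -- the diagonal unit
  refine ⟨⟨diagK binv, diagK b, ?_, ?_⟩, α, ?_⟩
  · rw [diagK_mul_diagK]
    rw [show (fun k => binv k * b k) = fun _ => (1 : R) from funext fun k => hbl k, diagK_one]
  · rw [diagK_mul_diagK]
    rw [show (fun k => b k * binv k) = fun _ => (1 : R) from funext fun k => hbr k, diagK_one]
  · intro A
    apply Subtype.ext
    show ((ψ A : triangularSubalgebra T R n) : Matrix (Fin n) (Fin n) R)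
        = Matrix.diagonal binv * (Matrix.of fun i j => α ((A : Matrix (Fin n) (Fin n) R) i j))
          * Matrix.diagonal b
    ext i j
    rw [Matrix.mul_diagonal, Matrix.diagonal_mul, Matrix.of_apply]
    rcases le_or_gt i j with h | h
    · have e1 : ((ψ A : triangularSubalgebra T R n) : Matrix (Fin n) (Fin n) R) i j
          = aMap ψ i j h ((A : Matrix (Fin n) (Fin n) R) i j) := by
        have h2 : ee i * ψ A * ee j = ψ (ee i * A * ee j) := by
          rw [_root_.map_mul, _root_.map_mul, hψ, hψ]
        rw [peirce i j h A, psi_sbm ψ hψ] at h2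
        have h3 := congrArg (fun B : triangularSubalgebra T R n =>
          (B : Matrix (Fin n) (Fin n) R) i j) h2
        simpa [peirce_val] using h3
      rw [e1]
      have h4 : aMap ψ i j h ((A : Matrix (Fin n) (Fin n) R) i j)
          = binv i * (α ((A : Matrix (Fin n) (Fin n) R) i j) * b j) := by
        set r := (A : Matrix (Fin n) (Fin n) R) i j
        calc aMap ψ i j h r = (binv i * b i) * aMap ψ i j h r := by rw [hbl i, one_mul]
        _ = binv i * (b i * aMap ψ i j h r) := by rw [mul_assoc]
        _ = binv i * aMap ψ i0 j (le0 j) r := by rw [relC i j h r]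
        _ = binv i * (α r * b j) := by rw [relA j r]
      rw [h4, mul_assoc]
    · rw [(ψ A).2 h, A.2 h, _root_.map_zero, mul_zero, zero_mul]
-- chunk 4: pieces for main proof

lemma diagK_zero : diagK (T := T) (R := R) (n := n) (fun _ => 0) = 0 := by
  apply Subtype.ext
  show Matrix.diagonal _ = _
  rw [Matrix.diagonal_zero]
  rfl

lemma sbm_eq_zero {i j : Fin n} {h : i ≤ j} {r : R}
    (hz : sbm (T := T) i j h r = 0) : r = 0 :=
  sbm_injective i j h (hz.trans (sbm_zero i j h).symm)

lemma diagK_delta (i : Fin n) :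
    diagK (T := T) (R := R) (fun k => if i = k then 1 else 0) = ee i := by
  apply Subtype.ext
  show Matrix.diagonal _ = Matrix.single i i (1 : R)
  ext a b
  rcases eq_or_ne a b with rfl | hab
  · rw [Matrix.diagonal_apply_eq]
    rcases eq_or_ne i a with rfl | hia
    · simp
    · rw [if_neg hia, Matrix.single_apply_of_ne _ _ _ _ _ (by tauto)]
  · rw [Matrix.diagonal_apply_ne _ hab,
      Matrix.single_apply_of_ne _ _ _ _ _ (by rintro ⟨rfl, rfl⟩; exact hab rfl)]

end Stmt12Aux

set_option maxHeartbeats 1000000 in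
open Stmt12Aux in
/-- If `R` is a normal `T`-algebra (all idempotents are central), every `T`-algebra
automorphism of the upper triangular matrix algebra `T(n,R)` is a product of an inner
automorphism and a ring automorphism. -/
theorem stmt12 (T R : Type*) [CommRing T] [Ring R] [Algebra T R] (n : ℕ) (hn : 1 ≤ n)
    (hnormal : ∀ e : R, e * e = e → ∀ r : R, e * r = r * e)
    (φ : triangularSubalgebra T R n ≃ₐ[T] triangularSubalgebra T R n) :
    ∃ (u : (triangularSubalgebra T R n)ˣ) (α : R ≃ₐ[T] R),
      ∀ A : triangularSubalgebra T R n,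
        φ A = ↑u * entrywiseMap T R n α A * ↑u⁻¹ := by
  classical
  have idem_f : ∀ i, φ (ee i) * φ (ee i) = φ (ee i) := by
    intro i
    rw [← _root_.map_mul]
    congr 1
    rw [ee, sbm_mul, one_mul]
  have orth_f : ∀ i j, i ≠ j → φ (ee i) * φ (ee j) = 0 := by
    intro i j hij
    rw [← _root_.map_mul, ee, ee, sbm_mul_ne hij, _root_.map_zero]
  have sum_f : ∑ i, φ (ee i) = 1 := by
    rw [← _root_.map_sum, sum_ee, _root_.map_one]
  set d : Fin n → Fin n → R :=
    fun i k => ((φ (ee i) : triangularSubalgebra T R n) : Matrix (Fin n) (Fin n) R) k k with hd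
  have d_idem : ∀ i k, d i k * d i k = d i k := by
    intro i k
    have h1 := diag_entry_mul (φ (ee i)) (φ (ee i)) k
    rw [idem_f i] at h1
    exact h1.symm
  have d_comm : ∀ (i k : Fin n) (r : R), d i k * r = r * d i k :=
    fun i k r => hnormal _ (d_idem i k) r
  have d_sum : ∀ k, ∑ i, d i k = 1 := by
    intro k
    calc ∑ i, d i k
        = ((∑ i, φ (ee i) : triangularSubalgebra T R n) : Matrix (Fin n) (Fin n) R) k k := by
          rw [AddSubmonoidClass.coe_finset_sum, Matrix.sum_apply]
    _ = ((1 : triangularSubalgebra T R n) : Matrix (Fin n) (Fin n) R) k k := by rw [sum_f]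
    _ = 1 := Matrix.one_apply_eq k
  have d_orth_col : ∀ i j k, i ≠ j → d i k * d j k = 0 := by
    intro i j k hij
    have h1 := diag_entry_mul (φ (ee i)) (φ (ee j)) k
    rw [orth_f i j hij] at h1
    simpa using h1.symm
  -- the diagonalizing unit
  set u0 : triangularSubalgebra T R n := ∑ i, diagK (fun k => d i k) * φ (ee i) with hu0
  have u0_diag : ∀ k, (u0 : Matrix (Fin n) (Fin n) R) k k = 1 := by
    intro k
    rw [hu0, AddSubmonoidClass.coe_finset_sum, Matrix.sum_apply]
    have h1 : ∀ i, ((diagK (fun k' => d i k') * φ (ee i) :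
        triangularSubalgebra T R n) : Matrix (Fin n) (Fin n) R) k k = d i k := by
      intro i
      rw [diag_entry_mul, diagK_val, Matrix.diagonal_apply_eq]
      exact d_idem i k
    rw [Finset.sum_congr rfl fun i _ => h1 i]
    exact d_sum k
  have hu : IsUnit u0 := isUnit_of_diag_one u0 u0_diag
  have key1 : ∀ j, u0 * φ (ee j) = diagK (fun k => d j k) * u0 := by
    intro j
    have hL : u0 * φ (ee j) = diagK (fun k => d j k) * φ (ee j) := by
      have hterm : ∀ i, diagK (fun k => d i k) * φ (ee i) * φ (ee j)
          = if i = j then diagK (fun k => d j k) * φ (ee j) else 0 := by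
        intro i
        rcases eq_or_ne i j with rfl | hij
        · rw [if_pos rfl, mul_assoc, idem_f]
        · rw [if_neg hij, mul_assoc, orth_f i j hij, mul_zero]
      rw [hu0, Finset.sum_mul, Finset.sum_congr rfl fun i _ => hterm i]
      simp
    have hR : diagK (fun k => d j k) * u0 = diagK (fun k => d j k) * φ (ee j) := by
      have hterm : ∀ i, diagK (fun k => d j k) * (diagK (fun k => d i k) * φ (ee i))
          = if i = j then diagK (fun k => d j k) * φ (ee j) else 0 := by
        intro i
        rcases eq_or_ne i j with rfl | hij
        · rw [if_pos rfl, ← mul_assoc, diagK_mul_diagK,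
            show (fun k => d i k * d i k) = fun k => d i k from
              funext fun k => d_idem i k]
        · rw [if_neg hij, ← mul_assoc, diagK_mul_diagK,
            show (fun k => d j k * d i k) = fun _ => (0 : R) from
              funext fun k => d_orth_col j i k (Ne.symm hij), diagK_zero, zero_mul]
      rw [hu0, Finset.mul_sum, Finset.sum_congr rfl fun i _ => hterm i]
      simp
    rw [hL, hR]
  set ψ : triangularSubalgebra T R n ≃ₐ[T] triangularSubalgebra T R n :=
    φ.trans (innerAut hu.unit) with hψdef
  have ψ_apply : ∀ A, ψ A = ↑hu.unit * φ A * ↑hu.unit⁻¹ := fun A => rfl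
  have ψee : ∀ j, ψ (ee j) = diagK (fun k => d j k) := by
    intro j
    rw [ψ_apply]
    have h1 : (↑hu.unit : triangularSubalgebra T R n) * φ (ee j)
        = diagK (fun k => d j k) * (↑hu.unit : triangularSubalgebra T R n) := by
      rw [hu.unit_spec]
      exact key1 j
    rw [h1, mul_assoc, Units.mul_inv, mul_one]
  -- the orthogonality conditions
  have hc : ∀ {i j k l : Fin n}, j < i → k ≤ l → d i k * d j l = 0 := by
    intro i j k l hji hkl
    have hz : diagK (T := T) (fun k' => d i k') * sbm k l hkl (1 : R) * diagK (fun k' => d j k') = 0 := by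
      conv_lhs => rw [← ψee i, ← ψee j, ← ψ.apply_symm_apply (sbm k l hkl (1 : R))]
      rw [← _root_.map_mul, ← _root_.map_mul, peirce_lt hji, _root_.map_zero]
    rw [diagK_sbm_diagK] at hz
    have h2 := sbm_eq_zero hz
    rwa [mul_one] at h2
  have hrow : ∀ {i k l : Fin n}, k ≠ l → d i k * d i l = 0 := by
    suffices hwlog : ∀ i k l : Fin n, k < l → d i k * d i l = 0 by
      intro i k l hkl
      rcases lt_or_gt_of_ne hkl with h | h
      · exact hwlog i k l h
      · rw [d_comm]
        exact hwlog i l k h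
    intro i k l hkl
    have corner : ∀ B : triangularSubalgebra T R n,
        diagK (T := T) (fun k' => d i k') * B * diagK (fun k' => d i k')
          = ψ (sbm i i le_rfl (((ψ.symm B : triangularSubalgebra T R n) :
              Matrix (Fin n) (Fin n) R) i i)) := by
      intro B
      conv_lhs => rw [← ψee i, ← ψ.apply_symm_apply B]
      rw [← _root_.map_mul, ← _root_.map_mul, peirce i i le_rfl]
    have hx := corner (sbm k k le_rfl 1)
    have hy := corner (sbm k l hkl.le 1)
    rw [diagK_sbm_diagK] at hx hy
    set r : R := ((ψ.symm (sbm k k le_rfl 1) : triangularSubalgebra T R n) :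
      Matrix (Fin n) (Fin n) R) i i with hr
    set s : R := ((ψ.symm (sbm k l hkl.le 1) : triangularSubalgebra T R n) :
      Matrix (Fin n) (Fin n) R) i i with hs
    rw [mul_one] at hx hy
    -- hx : sbm k k le_rfl (d i k * d i k) = ψ (sbm i i le_rfl r)
    rw [d_idem i k] at hx
    have hr_idem : r * r = r := by
      have h1 : ψ (sbm i i le_rfl (r * r)) = ψ (sbm i i le_rfl r) := by
        rw [← sbm_mul i i i le_rfl le_rfl, _root_.map_mul, ← hx, sbm_mul, d_idem i k, hx]
      exact sbm_injective i i le_rfl (ψ.injective h1)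
    have hcomm_rs : r * s = s * r := hnormal r hr_idem s
    have hxy : ψ (sbm i i le_rfl (r * s)) = sbm k l hkl.le (d i k * (d i k * d i l)) := by
      rw [← sbm_mul i i i le_rfl le_rfl, _root_.map_mul, ← hx, ← hy, sbm_mul]
    have hyx : ψ (sbm i i le_rfl (s * r)) = 0 := by
      rw [← sbm_mul i i i le_rfl le_rfl, _root_.map_mul, ← hx, ← hy,
        sbm_mul_ne (ne_of_gt hkl)]
    have hz : sbm (T := T) k l hkl.le (d i k * (d i k * d i l)) = 0 := by
      rw [← hxy, hcomm_rs, hyx]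
    have h3 := sbm_eq_zero hz
    calc d i k * d i l = (d i k * d i k) * d i l := by rw [d_idem i k]
    _ = d i k * (d i k * d i l) := by rw [mul_assoc]
    _ = 0 := h3
  have hpin := pinning d_comm d_sum hc hrow
  have ψee' : ∀ i, ψ (ee i) = ee i := by
    intro i
    rw [ψee i, show (fun k => d i k) = fun k => if i = k then 1 else 0 from
      funext fun k => hpin i k, diagK_delta]
  obtain ⟨V, α, hV⟩ := stage2 hn ψ ψee'
  refine ⟨hu.unit⁻¹ * V, α, fun A => ?_⟩
  have h1 := hV A
  rw [ψ_apply] at h1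
  have h2 : φ A = ↑hu.unit⁻¹ * (↑hu.unit * φ A * ↑hu.unit⁻¹) * ↑hu.unit := by
    simp only [mul_assoc, Units.inv_mul_cancel_left]
    rw [Units.inv_mul, mul_one]
  rw [h2, h1]
  simp only [Units.val_mul, mul_inv_rev, inv_inv, mul_assoc]
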